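/- Let p be a positive integer, let n_1,…,n_p be positive integers, and let α_1,…,α_p > 0 satisfy Σ_{i=1}^p α_i = 1. For every r with 0 < r < 1 there exists k_0 ∈ ℕ such that for every integer k > k_0 there exist nonnegative integers l_1,…,l_p with Σ_{i=1}^p l_i n_i ≤ k such that, setting l_{p+1} = k − Σ_{i=1}^p l_i n_i, one has: (i) Σ_{i=1}^p |l_i n_i/k − α_i| + l_{p+1}/k < r², and (ii) k²·(1 − r − Σ_{i=1}^p α_i²/n_i²) < k² − Σ_{i=1}^{p+1} l_i² < k²·(1 + r − Σ_{i=1}^p α_i²/n_i²). -/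

import Mathlib

set_option maxHeartbeats 1000000


/-- arithmetic content of Lemma 3.6: for `0 < r < 1` there is
`k₀` such that each `k > k₀` admits multiplicities `l_1,…,l_p` (with remainder
`l_{p+1} = k − Σ l_i n_i`) for which the induced trace is `r²`-close to the
weights `α_i` and `k² − Σ_{i=1}^{p+1} l_i²` is within `r·k²` of
`k²(1 − Σ α_i²/n_i²)`. -/
theorem stmt_3 (p : ℕ) (hp : 0 < p) (n : Fin p → ℕ) (hn : ∀ i, 0 < n i)
    (α : Fin p → ℝ) (hα : ∀ i, 0 < α i) (hαsum : ∑ i, α i = 1)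
    (r : ℝ) (hr0 : 0 < r) (hr1 : r < 1) :
    ∃ k₀ : ℕ, ∀ k : ℕ, k₀ < k →
      ∃ l : Fin p → ℕ, (∑ i, l i * n i) ≤ k ∧
        ((∑ i, |((l i * n i : ℕ) : ℝ) / k - α i|)
            + ((k - ∑ i, l i * n i : ℕ) : ℝ) / k < r ^ 2) ∧
        ((k : ℝ) ^ 2 * (1 - r - ∑ i, (α i) ^ 2 / (n i : ℝ) ^ 2)
            < (k : ℝ) ^ 2 - ((∑ i, ((l i : ℝ)) ^ 2)
                + (((k - ∑ i, l i * n i : ℕ) : ℝ)) ^ 2)) ∧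
        ((k : ℝ) ^ 2 - ((∑ i, ((l i : ℝ)) ^ 2)
              + (((k - ∑ i, l i * n i : ℕ) : ℝ)) ^ 2)
            < (k : ℝ) ^ 2 * (1 + r - ∑ i, (α i) ^ 2 / (n i : ℝ) ^ 2)) := by
  classical
  have hni : ∀ i, (0:ℝ) < n i := fun i => by exact_mod_cast hn i
  have hni1 : ∀ i, (1:ℝ) ≤ n i := fun i => by exact_mod_cast hn i
  set N : ℝ := ∑ i, (n i : ℝ) with hNdef
  have hNpos : 0 < N := Finset.sum_pos (fun i _ => hni i) ⟨⟨0, hp⟩, Finset.mem_univ _⟩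
  refine ⟨⌈2*N/r^2 + 2*p/r + N^2/r⌉₊, fun k hk => ?_⟩
  have hk0 : 0 < k := lt_of_le_of_lt (Nat.zero_le _) hk
  have hkR : (0:ℝ) < k := by exact_mod_cast hk0
  have hk1 : (1:ℝ) ≤ k := by exact_mod_cast hk0
  have hkbig : 2*N/r^2 + 2*p/r + N^2/r < k :=
    lt_of_le_of_lt (Nat.le_ceil _) (by exact_mod_cast hk)
  have h2p : 0 ≤ 2*(p:ℝ)/r := by positivity
  have h2N : 0 ≤ 2*N/r^2 := by positivity
  have hN2 : 0 ≤ N^2/r := by positivity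
  have hterm1 : 2*N < r^2 * k := by
    have : 2*N/r^2 < k := by linarith
    have := (div_lt_iff₀ (pow_pos hr0 2)).1 this
    linarith
  have hterm2 : 2*(p:ℝ) < r * k := by
    have : 2*(p:ℝ)/r < k := by linarith
    have := (div_lt_iff₀ hr0).1 this
    linarith
  have hterm3 : N^2 < r * k := by
    have : N^2/r < k := by linarith
    have := (div_lt_iff₀ hr0).1 this
    linarith
  have hαle1 : ∀ i, α i ≤ 1 := by
    intro i
    rw [← hαsum]
    exact Finset.single_le_sum (fun j _ => (hα j).le) (Finset.mem_univ i)
  set l : Fin p → ℕ := fun i => ⌊α i * k / n i⌋₊ with hldef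
  have hfl : ∀ i, (l i : ℝ) ≤ α i * k / n i := fun i =>
    Nat.floor_le (div_nonneg (mul_nonneg (hα i).le hkR.le) (hni i).le)
  have hfl' : ∀ i, α i * k / n i < l i + 1 := fun i => Nat.lt_floor_add_one _
  have hln_le : ∀ i, (l i : ℝ) * n i ≤ α i * k := by
    intro i
    rw [← le_div_iff₀ (hni i)]
    exact hfl i
  have hln_gt : ∀ i, α i * k - n i < (l i : ℝ) * n i := by
    intro i
    have := (div_lt_iff₀ (hni i)).1 (hfl' i)
    nlinarith [hni i]
  have hxk : ∀ i, α i * k / n i ≤ k := by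
    intro i
    rw [div_le_iff₀ (hni i)]
    nlinarith [mul_nonneg (hα i).le hkR.le, hni1 i, hαle1 i]
  have hsumR : (∑ i, ((l i : ℝ) * n i)) ≤ k := by
    calc ∑ i, ((l i : ℝ) * n i) ≤ ∑ i, α i * k := Finset.sum_le_sum fun i _ => hln_le i
    _ = k := by rw [← Finset.sum_mul, hαsum, one_mul]
  have hsum_le : (∑ i, l i * n i) ≤ k := by
    have : ((∑ i, l i * n i : ℕ):ℝ) ≤ k := by push_cast; exact hsumR
    exact_mod_cast this
  have hcast : ((k - ∑ i, l i * n i : ℕ) : ℝ) = (k:ℝ) - ∑ i, (l i : ℝ) * n i := by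
    rw [Nat.cast_sub hsum_le]; push_cast; ring
  have hrem_lt : (k:ℝ) - ∑ i, (l i : ℝ) * n i < N := by
    have heq : (k:ℝ) - ∑ i, (l i : ℝ) * n i = ∑ i, (α i * k - (l i:ℝ) * n i) := by
      rw [Finset.sum_sub_distrib, ← Finset.sum_mul, hαsum, one_mul]
    rw [heq, hNdef]
    exact Finset.sum_lt_sum_of_nonempty ⟨⟨0,hp⟩, Finset.mem_univ _⟩
      (fun i _ => by nlinarith [hln_gt i])
  have hrem_nonneg : (0:ℝ) ≤ (k:ℝ) - ∑ i, (l i : ℝ) * n i := by linarith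
  refine ⟨l, hsum_le, ?_, ?_, ?_⟩
  · -- condition (i)
    have habs : ∀ i, |((l i * n i : ℕ) : ℝ) / k - α i| ≤ (n i : ℝ) / k := by
      intro i
      have key : ((l i * n i : ℕ) : ℝ) / k - α i = ((l i:ℝ) * n i - α i * k) / k := by
        push_cast; field_simp
      rw [key, abs_div, abs_of_pos hkR]
      have hb : |(l i:ℝ) * n i - α i * k| ≤ (n i : ℝ) := by
        rw [abs_le]
        constructor <;> nlinarith [hln_le i, hln_gt i]
      gcongr
    have h1 : ∑ i, |((l i * n i : ℕ) : ℝ) / k - α i| ≤ N / k := by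
      rw [hNdef, Finset.sum_div]
      exact Finset.sum_le_sum fun i _ => habs i
    have h2 : ((k - ∑ i, l i * n i : ℕ) : ℝ) / k < N / k := by
      rw [hcast]
      gcongr
    have h3 : N / k + N / k < r ^ 2 := by
      rw [← add_div, div_lt_iff₀ hkR]
      nlinarith
    linarith
  all_goals {
    have hsq : ∀ i, (l i:ℝ)^2 ≤ (α i * k / n i)^2 := by
      intro i
      have h0 : (0:ℝ) ≤ (l i:ℝ) := Nat.cast_nonneg _
      nlinarith [hfl i]
    have hsq2 : ∀ i, (α i * k / n i)^2 - (l i:ℝ)^2 ≤ 2 * k := by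
      intro i
      have h0 : (0:ℝ) ≤ (l i:ℝ) := Nat.cast_nonneg _
      nlinarith [hfl i, hfl' i, hxk i]
    have hA : ∑ i, (α i * k / n i)^2 = (k:ℝ)^2 * ∑ i, (α i)^2 / (n i:ℝ)^2 := by
      rw [Finset.mul_sum]
      refine Finset.sum_congr rfl fun i _ => ?_
      field_simp
    have hS1 : ∑ i, (l i:ℝ)^2 ≤ (k:ℝ)^2 * ∑ i, (α i)^2 / (n i:ℝ)^2 := by
      rw [← hA]
      exact Finset.sum_le_sum fun i _ => hsq i
    have hS2 : (k:ℝ)^2 * (∑ i, (α i)^2 / (n i:ℝ)^2) - 2 * p * k ≤ ∑ i, (l i:ℝ)^2 := by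
      rw [← hA]
      have := Finset.sum_le_sum (fun i (_ : i ∈ Finset.univ) => hsq2 i)
      rw [Finset.sum_sub_distrib] at this
      simp only [Finset.sum_const, Finset.card_univ, Fintype.card_fin, nsmul_eq_mul] at this
      linarith
    have hrem2 : (((k - ∑ i, l i * n i : ℕ) : ℝ))^2 < r * (k:ℝ)^2 := by
      rw [hcast]
      nlinarith
    have hrem0 : (0:ℝ) ≤ (((k - ∑ i, l i * n i : ℕ) : ℝ))^2 := sq_nonneg _
    have h2pk : 2 * (p:ℝ) * k < r * (k:ℝ)^2 := by nlinarith
    nlinarith }
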